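/- For q ≥ 1, the bivariate generating function counting binary words of length n with k ones avoiding 1^{q+1} is B_q(x,y) = y(1 − (xy)^{q+1}) / (y − x y^2 − x y + (xy)^{q+2}). -/

import Mathlib

/-- `w` avoids the factor `1^k`, i.e. has no `k` consecutive `1`s. -/
def Avoids (k : ℕ) (w : List Bool) : Prop := ¬ (List.replicate k true <:+: w)

/-- The bivariate formal power series over `ℤ` with coefficient `c n k`
on `x^n y^k`. -/
noncomputable def mkSeries (c : ℕ → ℕ → ℤ) : MvPowerSeries (Fin 2) ℤ :=
  fun d => c (d 0) (d 1)

noncomputable def Xv : MvPowerSeries (Fin 2) ℤ := MvPowerSeries.X 0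
noncomputable def Yv : MvPowerSeries (Fin 2) ℤ := MvPowerSeries.X 1

namespace FibGF
open List

theorem inf_true (m : ℕ) (u : List Bool) :
    replicate (m+1) true <:+: u ++ [true] ↔ replicate (m+1) true <:+: u ∨ replicate m true <:+ u := by
  constructor
  · rintro ⟨s, t, h⟩
    rcases t.eq_nil_or_concat with rfl | ⟨t', x, rfl⟩
    · right
      rw [append_nil, replicate_succ', ← append_assoc] at h
      exact ⟨s, (List.append_inj' h rfl).1⟩
    · left
      simp only [concat_eq_append, ← append_assoc] at h
      exact ⟨s, t', by simpa [append_assoc] using (List.append_inj' h rfl).1⟩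
  · rintro (h | ⟨s, hs⟩)
    · exact h.trans (prefix_append u [true]).isInfix
    · exact ⟨s, [], by simp [replicate_succ', ← hs]⟩

theorem inf_false (m : ℕ) (u : List Bool) :
    replicate (m+1) true <:+: u ++ [false] ↔ replicate (m+1) true <:+: u := by
  constructor
  · rintro ⟨s, t, h⟩
    rcases t.eq_nil_or_concat with rfl | ⟨t', x, rfl⟩
    · rw [append_nil, replicate_succ', ← append_assoc] at h
      exact absurd (List.append_inj' h rfl).2 (by simp)
    · simp only [concat_eq_append, ← append_assoc] at h
      exact ⟨s, t', by simpa [append_assoc] using (List.append_inj' h rfl).1⟩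
  · exact fun h => h.trans (prefix_append u [false]).isInfix

theorem suf_bound (m j : ℕ) (a : List Bool)
    (h : replicate m true <:+ a ++ [false] ++ replicate j true) : m ≤ j := by
  by_contra hlt
  push_neg at hlt
  obtain ⟨s, hs⟩ := h
  have hm : m = (m - j) + j := by omega
  rw [hm, replicate_add, ← append_assoc] at hs
  have h1 := (List.append_inj' hs (by simp)).1
  obtain ⟨r, hr⟩ : ∃ r, m - j = r + 1 := ⟨m - j - 1, by omega⟩
  rw [hr] at h1
  rw [replicate_succ', ← append_assoc] at h1
  exact absurd (List.append_inj' h1 rfl).2 (by simp)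

variable (q : ℕ)

noncomputable def b (n k : ℕ) : ℕ :=
  Nat.card {w : List Bool // w.length = n ∧ w.count true = k ∧ Avoids (q + 1) w}

theorem finW {n : ℕ} {p : List Bool → Prop} (h : ∀ w, p w → w.length = n) :
    Finite {w : List Bool // p w} := by
  have hs : {w : List Bool | p w} ⊆ {w | w.length = n} := fun w hw => h w hw
  exact ((List.finite_length_eq Bool n).subset hs).to_subtype

theorem avoids_pad {v : List Bool} (hv : Avoids (q+1) v) :
    ∀ j, j ≤ q → Avoids (q+1) (v ++ [false] ++ replicate j true) := by
  intro j
  induction j with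
  | zero =>
    intro _ hi
    rw [replicate_zero, append_nil] at hi
    exact hv ((inf_false q v).mp hi)
  | succ j ih =>
    intro hj hi
    rw [show replicate (j+1) true = replicate j true ++ [true] from replicate_succ' .., ← append_assoc] at hi
    rcases (inf_true q _).mp hi with h | h
    · exact ih (by omega) h
    · exact absurd (suf_bound q j _ h) (by omega)

theorem eq_rep_false {n : ℕ} {w : List Bool} (h1 : w.length = n) (h2 : w.count true = 0) :
    w = replicate n false := by
  rw [eq_replicate_iff]
  refine ⟨h1, fun b hb => ?_⟩
  cases b
  · rfl
  · exact absurd hb (List.count_eq_zero.mp h2)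

theorem avoids_rep_false (n : ℕ) : Avoids (q+1) (replicate n false) := by
  intro h
  have : true ∈ replicate n false := h.subset (by simp)
  simp at this

theorem b_zero_right (n : ℕ) : b q n 0 = 1 := by
  rw [b, Nat.card_eq_one_iff_unique]
  constructor
  · constructor
    rintro ⟨w, hw1, hw2, -⟩ ⟨v, hv1, hv2, -⟩
    exact Subtype.ext ((eq_rep_false hw1 hw2).trans (eq_rep_false hv1 hv2).symm)
  · exact ⟨⟨replicate n false, by simp, by simp [List.count_eq_zero], avoids_rep_false q n⟩⟩

theorem b_zero_left (k : ℕ) : b q 0 (k+1) = 0 := by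
  have : IsEmpty {w : List Bool // w.length = 0 ∧ w.count true = k+1 ∧ Avoids (q + 1) w} := by
    constructor
    rintro ⟨w, h1, h2, -⟩
    rw [List.length_eq_zero_iff] at h1
    subst h1
    simp at h2
  exact Nat.card_of_isEmpty

theorem card_succ (n k : ℕ) :
    b q (n+1) (k+1) = b q n (k+1) +
      Nat.card {u : List Bool //
        (u.length = n ∧ u.count true = k ∧ Avoids (q+1) u) ∧ ¬ replicate q true <:+ u} := by
  classical
  haveI : Finite {u : List Bool // u.length = n ∧ u.count true = k+1 ∧ Avoids (q+1) u} :=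
    finW (fun w hw => hw.1)
  haveI : Finite {u : List Bool //
      (u.length = n ∧ u.count true = k ∧ Avoids (q+1) u) ∧ ¬ replicate q true <:+ u} :=
    finW (fun w hw => hw.1.1)
  simp only [b]
  rw [← Nat.card_sum]
  refine Nat.card_congr (Equiv.ofBijective ?_ ⟨?_, ?_⟩).symm
  · exact Sum.elim
      (fun x => ⟨x.val ++ [false], by simp [x.2.1], by simp [x.2.2.1],
        fun hi => x.2.2.2 ((inf_false q x.val).mp hi)⟩)
      (fun x => ⟨x.val ++ [true], by simp [x.2.1.1], by simp [x.2.1.2.1],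
        fun hi => ((inf_true q x.val).mp hi).elim x.2.1.2.2 x.2.2⟩)
  · rintro (x | x) (y | y) h <;>
      simp only [Sum.elim_inl, Sum.elim_inr, Subtype.mk.injEq] at h
    · exact congrArg Sum.inl (Subtype.ext (by simpa using h))
    · have := congrArg List.getLast? h
      simp at this
    · have := congrArg List.getLast? h
      simp at this
    · exact congrArg Sum.inr (Subtype.ext (by simpa using h))
  · rintro ⟨w, h1, h2, h3⟩
    rcases w.eq_nil_or_concat with rfl | ⟨u, x, rfl⟩
    · simp at h1
    simp only [concat_eq_append] at h1 h2 h3 ⊢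
    rw [length_append] at h1
    simp only [length_cons, length_nil] at h1
    cases x
    · refine ⟨Sum.inl ⟨u, by omega, by simpa using h2, fun hi => h3 ((inf_false q u).mpr hi)⟩, ?_⟩
      exact Subtype.ext rfl
    · have h3' := fun h => h3 ((inf_true q u).mpr h)
      refine ⟨Sum.inr ⟨u, ⟨by omega, by simpa using h2, fun hi => h3' (Or.inl hi)⟩,
        fun hs => h3' (Or.inr hs)⟩, ?_⟩
      exact Subtype.ext rfl

theorem card_split (n k : ℕ) :
    b q n k = Nat.card {u : List Bool //
        (u.length = n ∧ u.count true = k ∧ Avoids (q+1) u) ∧ ¬ replicate q true <:+ u}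
      + Nat.card {u : List Bool //
        (u.length = n ∧ u.count true = k ∧ Avoids (q+1) u) ∧ replicate q true <:+ u} := by
  classical
  haveI : Finite {u : List Bool //
      (u.length = n ∧ u.count true = k ∧ Avoids (q+1) u) ∧ ¬ replicate q true <:+ u} :=
    finW (fun w hw => hw.1.1)
  haveI : Finite {u : List Bool //
      (u.length = n ∧ u.count true = k ∧ Avoids (q+1) u) ∧ replicate q true <:+ u} :=
    finW (fun w hw => hw.1.1)
  rw [b, ← Nat.card_sum]
  refine Nat.card_congr ?_
  exact ((Equiv.sumCompl (fun x : {u : List Bool //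
      u.length = n ∧ u.count true = k ∧ Avoids (q+1) u} =>
        replicate q true <:+ x.val)).symm.trans (Equiv.sumComm _ _)).trans
    (Equiv.sumCongr
      (Equiv.subtypeSubtypeEquivSubtypeInter
        (fun u : List Bool => u.length = n ∧ u.count true = k ∧ Avoids (q+1) u)
        (fun u => ¬ replicate q true <:+ u))
      (Equiv.subtypeSubtypeEquivSubtypeInter
        (fun u : List Bool => u.length = n ∧ u.count true = k ∧ Avoids (q+1) u)
        (fun u => replicate q true <:+ u)))


theorem card_suffix_lt (n k : ℕ) (h : n < q) :
    Nat.card {u : List Bool //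
      (u.length = n ∧ u.count true = k ∧ Avoids (q+1) u) ∧ replicate q true <:+ u} = 0 := by
  have : IsEmpty {u : List Bool //
      (u.length = n ∧ u.count true = k ∧ Avoids (q+1) u) ∧ replicate q true <:+ u} := by
    constructor
    rintro ⟨u, ⟨h1, -, -⟩, hs⟩
    have hl := hs.length_le
    simp only [length_replicate, h1] at hl
    omega
  exact Nat.card_of_isEmpty

theorem card_suffix_eq (k : ℕ) :
    Nat.card {u : List Bool //
      (u.length = q ∧ u.count true = k ∧ Avoids (q+1) u) ∧ replicate q true <:+ u}
      = if k = q then 1 else 0 := by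
  have huniq : ∀ u : List Bool, u.length = q → replicate q true <:+ u → u = replicate q true := by
    intro u h1 hs
    exact (hs.eq_of_length (by simp [h1])).symm
  split_ifs with hk
  · rw [Nat.card_eq_one_iff_unique]
    refine ⟨⟨?_⟩, ⟨⟨replicate q true, ⟨by simp, by simp [hk], ?_⟩, suffix_rfl⟩⟩⟩
    · rintro ⟨u, ⟨h1, -, -⟩, hsu⟩ ⟨v, ⟨g1, -, -⟩, hsv⟩
      exact Subtype.ext ((huniq u h1 hsu).trans (huniq v g1 hsv).symm)
    · intro hi
      have := hi.length_le
      simp at this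
  · have : IsEmpty {u : List Bool //
        (u.length = q ∧ u.count true = k ∧ Avoids (q+1) u) ∧ replicate q true <:+ u} := by
      constructor
      rintro ⟨u, ⟨h1, h2, -⟩, hs⟩
      rw [huniq u h1 hs] at h2
      simp at h2
      exact hk h2.symm
    exact Nat.card_of_isEmpty

theorem card_suffix_big (m j : ℕ) :
    Nat.card {u : List Bool //
      (u.length = m+q+1 ∧ u.count true = j+q ∧ Avoids (q+1) u) ∧ replicate q true <:+ u}
      = b q m j := by
  rw [b]
  refine (Nat.card_congr (Equiv.ofBijective ?_ ⟨?_, ?_⟩)).symm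
  · exact fun x => ⟨x.val ++ [false] ++ replicate q true,
      ⟨by simp only [length_append, length_replicate, length_cons, length_nil, x.2.1]; omega,
       by simp [x.2.2.1],
       avoids_pad q x.2.2.2 q le_rfl⟩,
      suffix_append _ _⟩
  · intro x y h
    simp only [Subtype.mk.injEq] at h
    exact Subtype.ext (by simpa using h)
  · rintro ⟨u, ⟨h1, h2, h3⟩, hs⟩
    obtain ⟨v, hv⟩ := hs
    have hlv : v.length = m + 1 := by
      have := congrArg List.length hv
      simp only [length_append, length_replicate] at this
      omega
    rcases v.eq_nil_or_concat with rfl | ⟨s, x, rfl⟩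
    · simp at hlv
    simp only [concat_eq_append] at hv hlv
    cases x
    · have hsu : s <:+: u := ⟨[], [false] ++ replicate q true, by simp [← hv]⟩
      rw [← hv] at h1 h2
      simp only [length_append, length_replicate, length_cons, length_nil] at h1
      simp only [count_append, count_replicate, count_cons, count_nil] at h2
      refine ⟨⟨s, by omega, by simp at h2; omega, fun hi => h3 (hi.trans hsu)⟩, Subtype.ext ?_⟩
      simpa using hv
    · exfalso
      apply h3
      refine ⟨s, [], ?_⟩
      simp [replicate_succ, ← hv]

theorem card_suffix (n k : ℕ) :
    Nat.card {u : List Bool //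
      (u.length = n ∧ u.count true = k ∧ Avoids (q+1) u) ∧ replicate q true <:+ u}
      = (if n = q ∧ k = q then 1 else 0)
        + (if q+1 ≤ n ∧ q ≤ k then b q (n-(q+1)) (k-q) else 0) := by
  rcases lt_trichotomy q n with h | rfl | h
  swap
  · rw [card_suffix_eq q k]
    split_ifs <;> simp_all <;> omega
  swap
  · rw [card_suffix_lt q n k h, if_neg (by omega), if_neg (by omega)]
  · obtain ⟨m, rfl⟩ : ∃ m, n = m+q+1 := ⟨n-(q+1), by omega⟩
    by_cases hk : q ≤ k
    · obtain ⟨j, rfl⟩ : ∃ j, k = j+q := ⟨k-q, by omega⟩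
      rw [card_suffix_big q m j, if_neg (by omega), if_pos (by omega)]
      have e1 : m+q+1-(q+1) = m := by omega
      have e2 : j+q-q = j := by omega
      rw [e1, e2, Nat.zero_add]
    · rw [if_neg (by omega), if_neg (by omega)]
      have : IsEmpty {u : List Bool //
          (u.length = m+q+1 ∧ u.count true = k ∧ Avoids (q+1) u) ∧ replicate q true <:+ u} := by
        constructor
        rintro ⟨u, ⟨-, h2, -⟩, hs⟩
        have := hs.sublist.count_le true
        simp only [count_replicate, h2] at this
        simp at this
        omega
      exact Nat.card_of_isEmpty

theorem REC (n k : ℕ) :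
    b q (n+1) (k+1) + ((if n = q ∧ k = q then 1 else 0)
      + (if q+1 ≤ n ∧ q ≤ k then b q (n-(q+1)) (k-q) else 0))
      = b q n (k+1) + b q n k := by
  rw [card_succ, ← card_suffix, card_split q n k]
  omega

theorem KEY (n k : ℕ) :
    (if 1 ≤ k then (b q n (k-1) : ℤ) else 0)
      - (if 1 ≤ n ∧ 2 ≤ k then (b q (n-1) (k-2) : ℤ) else 0)
      - (if 1 ≤ n ∧ 1 ≤ k then (b q (n-1) (k-1) : ℤ) else 0)
      + (if q+2 ≤ n ∧ q+2 ≤ k then (b q (n-(q+2)) (k-(q+2)) : ℤ) else 0)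
      = (if n = 0 ∧ k = 1 then 1 else 0) - (if n = q+1 ∧ k = q+2 then 1 else 0) := by
  have hb : ∀ m, b q m 0 = 1 := b_zero_right q
  have hb0 : ∀ i, b q 0 (i+1) = 0 := b_zero_left q
  rcases k with _ | _ | k
  · split_ifs <;> (try simp_all) <;> omega
  · simp only [Nat.sub_self]
    have h1 := hb n
    have h2 := hb (n-1)
    split_ifs <;> (try simp_all) <;> omega
  · rcases n with _ | n
    · simp only [show k+2-1 = k+1 from rfl]
      have h1 := hb0 k
      split_ifs <;> (try simp_all) <;> omega
    · simp only [show k+2-1 = k+1 from rfl, show k+2-2 = k from rfl,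
        show n+1-1 = n from rfl]
      have h4 : (if q+2 ≤ n+1 ∧ q+2 ≤ k+2 then (b q (n+1-(q+2)) (k+2-(q+2)) : ℤ) else 0)
          = (if q+1 ≤ n ∧ q ≤ k then (b q (n-(q+1)) (k-q) : ℤ) else 0) := by
        by_cases h : q+1 ≤ n ∧ q ≤ k
        · rw [if_pos (by omega), if_pos h]
          congr 2 <;> omega
        · rw [if_neg (by omega), if_neg h]
      rw [h4]
      have hrec := REC q n k
      rw [if_pos (show 1 ≤ k+2 by omega),
        if_pos (show 1 ≤ n+1 ∧ 2 ≤ k+2 from ⟨by omega, by omega⟩),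
        if_pos (show 1 ≤ n+1 ∧ 1 ≤ k+2 from ⟨by omega, by omega⟩),
        if_neg (show ¬(n+1 = 0 ∧ k+2 = 1) from by omega)]
      have h6 : (if n+1 = q+1 ∧ k+2 = q+2 then (1:ℤ) else 0)
          = (if n = q ∧ k = q then (1:ℤ) else 0) := by
        by_cases h : n = q ∧ k = q
        · rw [if_pos (by omega), if_pos h]
        · rw [if_neg (by omega), if_neg h]
      rw [h6]
      by_cases h1 : n = q ∧ k = q <;> by_cases h2 : q+1 ≤ n ∧ q ≤ k
      · omega
      · rw [if_pos h1, if_neg h2] at hrec ⊢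
        omega
      · rw [if_neg h1, if_pos h2] at hrec ⊢
        omega
      · rw [if_neg h1, if_neg h2] at hrec ⊢
        omega

end FibGF

theorem fibonacci_words_bivariate_gf (q : ℕ) (hq : 1 ≤ q) :
    mkSeries (fun n k =>
        (Nat.card {w : List Bool // w.length = n ∧ w.count true = k ∧ Avoids (q + 1) w} : ℤ)) *
      (Yv - Xv * Yv ^ 2 - Xv * Yv + (Xv * Yv) ^ (q + 2)) =
    Yv * (1 - (Xv * Yv) ^ (q + 1)) := by
  classical
  set f := mkSeries (fun n k =>
      (Nat.card {w : List Bool // w.length = n ∧ w.count true = k ∧ Avoids (q + 1) w} : ℤ)) with hf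
  have hb : ∀ e : Fin 2 →₀ ℕ, (MvPowerSeries.coeff e) f = (FibGF.b q (e 0) (e 1) : ℤ) :=
    fun e => rfl
  have hY : Yv = MvPowerSeries.monomial (R := ℤ) (Finsupp.single 1 1) 1 := MvPowerSeries.X_def 1
  have hXY : Xv * Yv
      = MvPowerSeries.monomial (R := ℤ) (Finsupp.single 0 1 + Finsupp.single 1 1) 1 := by
    rw [Xv, Yv, MvPowerSeries.X_def, MvPowerSeries.X_def,
      MvPowerSeries.monomial_mul_monomial, one_mul]
  have hXY2 : Xv * Yv ^ 2
      = MvPowerSeries.monomial (R := ℤ) (Finsupp.single 0 1 + Finsupp.single 1 2) 1 := by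
    rw [Xv, Yv, MvPowerSeries.X_def, MvPowerSeries.X_pow_eq,
      MvPowerSeries.monomial_mul_monomial, one_mul]
  have hP : ∀ r : ℕ, (Xv * Yv) ^ r
      = MvPowerSeries.monomial (R := ℤ) (Finsupp.single 0 r + Finsupp.single 1 r) 1 := by
    intro r
    rw [Xv, Yv, mul_pow, MvPowerSeries.X_pow_eq, MvPowerSeries.X_pow_eq,
      MvPowerSeries.monomial_mul_monomial, one_mul]
  have hYP : Yv * (Xv * Yv) ^ (q+1)
      = MvPowerSeries.monomial (R := ℤ) (Finsupp.single 0 (q+1) + Finsupp.single 1 (q+2)) 1 := by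
    have hidx : Finsupp.single (1 : Fin 2) 1
        + (Finsupp.single (0 : Fin 2) (q+1) + Finsupp.single 1 (q+1))
        = Finsupp.single (0 : Fin 2) (q+1) + Finsupp.single 1 (q+2) := by
      ext i
      fin_cases i <;>
        simp [Finsupp.add_apply, Finsupp.single_apply] <;> omega
    rw [hP, hY, MvPowerSeries.monomial_mul_monomial, one_mul, hidx]
  apply MvPowerSeries.ext
  intro d
  rw [mul_sub, mul_one, mul_add, mul_sub, mul_sub]
  rw [hYP, hXY2, hP (q+2), hXY, hY]
  simp only [map_add, map_sub]
  rw [MvPowerSeries.coeff_mul_monomial, MvPowerSeries.coeff_mul_monomial,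
    MvPowerSeries.coeff_mul_monomial, MvPowerSeries.coeff_mul_monomial,
    MvPowerSeries.coeff_monomial, MvPowerSeries.coeff_monomial]
  have e00 : ∀ c : ℕ, (Finsupp.single (0 : Fin 2) c) 0 = c := fun c => Finsupp.single_eq_same
  have e11 : ∀ c : ℕ, (Finsupp.single (1 : Fin 2) c) 1 = c := fun c => Finsupp.single_eq_same
  have e01 : ∀ c : ℕ, (Finsupp.single (0 : Fin 2) c) 1 = 0 :=
    fun c => Finsupp.single_eq_of_ne (by decide)
  have e10 : ∀ c : ℕ, (Finsupp.single (1 : Fin 2) c) 0 = 0 :=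
    fun c => Finsupp.single_eq_of_ne (by decide)
  have hle1 : ∀ c : ℕ, (Finsupp.single (1 : Fin 2) c ≤ d) ↔ c ≤ d 1 := by
    intro c
    rw [Finsupp.le_def, Fin.forall_fin_two]
    simp [e10, e11]
  have hle2 : ∀ a c : ℕ, ((Finsupp.single (0 : Fin 2) a + Finsupp.single 1 c) ≤ d)
      ↔ a ≤ d 0 ∧ c ≤ d 1 := by
    intro a c
    rw [Finsupp.le_def, Fin.forall_fin_two]
    simp [Finsupp.add_apply, e00, e11, e01, e10]
  have heq1 : (d = Finsupp.single (1 : Fin 2) 1) ↔ (d 0 = 0 ∧ d 1 = 1) := by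
    rw [DFunLike.ext_iff, Fin.forall_fin_two]
    simp [e10, e11]
  have heq2 : (d = Finsupp.single (0 : Fin 2) (q+1) + Finsupp.single 1 (q+2))
      ↔ (d 0 = q+1 ∧ d 1 = q+2) := by
    rw [DFunLike.ext_iff, Fin.forall_fin_two]
    simp [Finsupp.add_apply, e00, e11, e01, e10]
  simp only [hb, mul_one, Finsupp.tsub_apply, Finsupp.add_apply, e00, e11, e01, e10,
    Nat.sub_zero, add_zero, zero_add, hle1, hle2, heq1, heq2]
  exact FibGF.KEY q (d 0) (d 1)
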